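/- arXiv:2504.09669 — 5 statements merged into one kernel-verified Lean document; each statement's English description precedes it below -/
import Mathlib

section
/- Let $v : 2^U \to \mathbb{R}_{\geq 0}$ be a monotone submodular function and $\phi : U \to \mathbb{R}_{\geq 0}$. Define $\hat{v}(S) := \min_{T \subseteq S} \{ v(T) + \sum_{j \in S\setminus T} \phi_j \}$. Then $\hat{v}$ is submodular: for all $S, T \subseteq U$, $\hat{v}(S)+\hat{v}(T) \geq \hat{v}(S\cap T)+\hat{v}(S\cup T)$. -/
open Finset

/-- The greedy proxy function: `vhat v φ S = min_{T ⊆ S} (v T + ∑_{j ∈ S \ T} φ j)`. -/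
noncomputable def vhat {U : Type*} [DecidableEq U] (v : Finset U → ℝ) (φ : U → ℝ)
    (S : Finset U) : ℝ :=
  S.powerset.inf' ⟨∅, Finset.mem_powerset.mpr (Finset.empty_subset S)⟩
    (fun T => v T + ∑ j ∈ S \ T, φ j)

theorem vhat_submodular {U : Type*} [DecidableEq U] [Fintype U]
    (v : Finset U → ℝ) (φ : U → ℝ)
    (hnn : ∀ S, 0 ≤ v S)
    (hmono : ∀ S T : Finset U, S ⊆ T → v S ≤ v T)
    (hsub : ∀ S T : Finset U, v S + v T ≥ v (S ∩ T) + v (S ∪ T))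
    (hφ : ∀ j, 0 ≤ φ j) :
    ∀ S T : Finset U, vhat v φ S + vhat v φ T ≥ vhat v φ (S ∩ T) + vhat v φ (S ∪ T) := by
  intro S T
  obtain ⟨A, hAmem, hAeq⟩ := Finset.exists_mem_eq_inf' (α := ℝ)
    ⟨∅, Finset.mem_powerset.mpr (Finset.empty_subset S)⟩
    (fun T' => v T' + ∑ j ∈ S \ T', φ j)
  obtain ⟨B, hBmem, hBeq⟩ := Finset.exists_mem_eq_inf' (α := ℝ)
    ⟨∅, Finset.mem_powerset.mpr (Finset.empty_subset T)⟩
    (fun T' => v T' + ∑ j ∈ T \ T', φ j)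
  rw [Finset.mem_powerset] at hAmem hBmem
  have h1 : vhat v φ (S ∩ T) ≤ v (A ∩ B) + ∑ j ∈ (S ∩ T) \ (A ∩ B), φ j := by
    apply Finset.inf'_le
    exact Finset.mem_powerset.mpr (Finset.inter_subset_inter hAmem hBmem)
  have h2 : vhat v φ (S ∪ T) ≤ v (A ∪ B) + ∑ j ∈ (S ∪ T) \ (A ∪ B), φ j := by
    apply Finset.inf'_le
    exact Finset.mem_powerset.mpr (Finset.union_subset_union hAmem hBmem)
  have key : ∀ X : Finset U, ∑ j ∈ X, φ j = ∑ j : U, if j ∈ X then φ j else 0 := by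
    intro X
    rw [Finset.sum_ite_mem, Finset.univ_inter]
  have hsum : ∑ j ∈ S \ A, φ j + ∑ j ∈ T \ B, φ j
      = ∑ j ∈ (S ∩ T) \ (A ∩ B), φ j + ∑ j ∈ (S ∪ T) \ (A ∪ B), φ j := by
    rw [key (S \ A), key (T \ B), key ((S ∩ T) \ (A ∩ B)), key ((S ∪ T) \ (A ∪ B)),
      ← Finset.sum_add_distrib, ← Finset.sum_add_distrib]
    apply Finset.sum_congr rfl
    intro j _
    have hAS : j ∈ A → j ∈ S := fun h => hAmem h
    have hBT : j ∈ B → j ∈ T := fun h => hBmem h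
    by_cases h1 : j ∈ S <;> by_cases h2 : j ∈ T <;>
      by_cases h3 : j ∈ A <;> by_cases h4 : j ∈ B <;>
      simp_all [Finset.mem_sdiff, Finset.mem_inter, Finset.mem_union]
  have hAB := hsub A B
  unfold vhat at h1 h2 ⊢
  rw [hAeq, hBeq]
  linarith
end

section
/- Let $v : 2^U \to \mathbb{R}_{\geq 0}$ be a monotone submodular function with $v(\emptyset)=0$, let $(e_1,\dots,e_n)$ be an ordering of a subset $P \subseteq U$, and define $\phi_{e_t} := v(\{e_1,\dots,e_t\}) - v(\{e_1,\dots,e_{t-1}\})$ for each $t$. Then for every $T \subseteq P$, $v(T) \geq \sum_{j \in T} \phi_j$. -/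
open Finset

/-- The first `t` elements of the ordering `e`. -/
def prefixSet {U : Type*} [DecidableEq U] {n : ℕ} (e : Fin n → U) (t : ℕ) : Finset U :=
  (Finset.univ.filter fun i : Fin n => (i : ℕ) < t).image e

theorem value_ge_sum_marginals {U : Type*} [DecidableEq U] [Fintype U]
    (v : Finset U → ℝ)
    (hnn : ∀ S, 0 ≤ v S) (hempty : v ∅ = 0)
    (hmono : ∀ S T : Finset U, S ⊆ T → v S ≤ v T)
    (hsub : ∀ S T : Finset U, v S + v T ≥ v (S ∩ T) + v (S ∪ T))
    {n : ℕ} (e : Fin n → U) (hinj : Function.Injective e)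
    (φ : U → ℝ)
    (hφ : ∀ t : Fin n, φ (e t) = v (prefixSet e ((t : ℕ) + 1)) - v (prefixSet e (t : ℕ)))
    (T : Finset U) (hT : T ⊆ Finset.univ.image e) :
    v T ≥ ∑ j ∈ T, φ j := by
  have key : ∀ t : ℕ, ∑ j ∈ T ∩ prefixSet e t, φ j ≤ v (T ∩ prefixSet e t) := by
    intro t
    induction t with
    | zero =>
      have h0 : prefixSet e 0 = ∅ := by
        simp [prefixSet]
      simp [h0, hempty]
    | succ t ih =>
      by_cases ht : t < n
      · have hpre : prefixSet e (t+1) = insert (e ⟨t, ht⟩) (prefixSet e t) := by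
          ext x
          simp only [prefixSet, mem_image, mem_filter, mem_univ, true_and, mem_insert]
          constructor
          · rintro ⟨i, hi, rfl⟩
            rcases Nat.lt_succ_iff_lt_or_eq.mp hi with h | h
            · exact Or.inr ⟨i, h, rfl⟩
            · exact Or.inl (by rw [show i = (⟨t, ht⟩ : Fin n) from Fin.ext h])
          · rintro (rfl | ⟨i, hi, rfl⟩)
            · exact ⟨⟨t, ht⟩, Nat.lt_succ_self t, rfl⟩
            · exact ⟨i, Nat.lt_succ_of_lt hi, rfl⟩
        have hnot : e ⟨t, ht⟩ ∉ prefixSet e t := by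
          simp only [prefixSet, mem_image, mem_filter, mem_univ, true_and]
          rintro ⟨i, hi, hie⟩
          have : i = ⟨t, ht⟩ := hinj hie
          subst this
          simp at hi
        have hsubset : T ∩ prefixSet e t ⊆ prefixSet e t := inter_subset_right
        by_cases hmem : e ⟨t, ht⟩ ∈ T
        · have hTi : T ∩ prefixSet e (t+1) = insert (e ⟨t, ht⟩) (T ∩ prefixSet e t) := by
            rw [hpre, Finset.inter_insert_of_mem hmem]
          have hnotT : e ⟨t, ht⟩ ∉ T ∩ prefixSet e t := fun h =>
            hnot (mem_of_mem_inter_right h)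
          have hmarg : v (T ∩ prefixSet e t) + φ (e ⟨t, ht⟩)
              ≤ v (insert (e ⟨t, ht⟩) (T ∩ prefixSet e t)) := by
            have h2 := hsub (insert (e ⟨t, ht⟩) (T ∩ prefixSet e t)) (prefixSet e t)
            have hint : insert (e ⟨t, ht⟩) (T ∩ prefixSet e t) ∩ prefixSet e t
                = T ∩ prefixSet e t := by
              rw [Finset.insert_inter_of_notMem hnot]
              exact inter_eq_left.mpr hsubset
            have huni : insert (e ⟨t, ht⟩) (T ∩ prefixSet e t) ∪ prefixSet e t
                = prefixSet e (t+1) := by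
              rw [hpre, Finset.insert_union, Finset.union_eq_right.mpr hsubset]
            rw [hint, huni] at h2
            have hphi := hφ ⟨t, ht⟩
            simp only [Fin.val_mk] at hphi
            rw [hphi]
            linarith
          rw [hTi, Finset.sum_insert hnotT]
          calc φ (e ⟨t, ht⟩) + ∑ j ∈ T ∩ prefixSet e t, φ j
              ≤ φ (e ⟨t, ht⟩) + v (T ∩ prefixSet e t) := by linarith
            _ ≤ v (insert (e ⟨t, ht⟩) (T ∩ prefixSet e t)) := by linarith
        · have hTi : T ∩ prefixSet e (t+1) = T ∩ prefixSet e t := by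
            rw [hpre, Finset.inter_insert_of_notMem hmem]
          rw [hTi]; exact ih
      · have hpre : prefixSet e (t+1) = prefixSet e t := by
          unfold prefixSet
          congr 1
          ext i
          simp only [mem_filter, mem_univ, true_and]
          have := i.isLt
          omega
        rw [hpre]; exact ih
  have hfin : prefixSet e n = Finset.univ.image e := by
    unfold prefixSet
    congr 1
    ext i
    simp [i.isLt]
  have hTeq : T ∩ prefixSet e n = T := by
    rw [hfin]
    exact inter_eq_left.mpr hT
  have := key n
  rw [hTeq] at this
  exact this
end

section
/- Let $v : 2^U \to \mathbb{R}_{\geq 0}$ be a monotone submodular function with $v(\emptyset)=0$, let $(e_1,\dots,e_n)$ be an ordering of a subset $P\subseteq U$, define $\phi_{e_t} := v(\{e_1,\dots,e_t\}) - v(\{e_1,\dots,e_{t-1}\})$, and extend $\phi_j$ arbitrarily nonnegatively to $U\setminus P$. Define $\hat{v}(S) := \min_{T\subseteq S}\{v(T)+\sum_{j\in S\setminus T}\phi_j\}$. Then for every single element $e_t \in P$ one has $\hat{v}(\{e_t\}) = \phi_{e_t}$, and for every $S \subseteq P$, $\hat{v}(S) = \sum_{j\in S}\phi_j$ (i.e.,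 $\hat{v}$ is additive on subsets of $P$). -/
open Finset

lemma prefixSet_succ {U : Type*} [DecidableEq U] {n : ℕ} (e : Fin n → U) (t : Fin n) :
    prefixSet e ((t : ℕ) + 1) = insert (e t) (prefixSet e (t : ℕ)) := by
  have h : (Finset.univ.filter fun i : Fin n => (i : ℕ) < (t : ℕ) + 1)
      = insert t (Finset.univ.filter fun i : Fin n => (i : ℕ) < (t : ℕ)) := by
    ext i
    simp [Nat.lt_succ_iff_lt_or_eq, Fin.ext_iff, or_comm]
    rw [Fin.le_iff_val_le_val, Fin.lt_iff_val_lt_val]; omega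
  rw [prefixSet, prefixSet, h, Finset.image_insert]

lemma e_not_mem_prefix {U : Type*} [DecidableEq U] {n : ℕ} (e : Fin n → U)
    (hinj : Function.Injective e) (t : Fin n) : e t ∉ prefixSet e (t : ℕ) := by
  simp only [prefixSet, mem_image, mem_filter]
  rintro ⟨i, ⟨-, hlt⟩, heq⟩
  have := hinj heq
  subst this
  exact lt_irrefl _ hlt

lemma sum_phi_le {U : Type*} [DecidableEq U] [Fintype U]
    (v : Finset U → ℝ) (hempty : v ∅ = 0)
    (hsub : ∀ S T : Finset U, v S + v T ≥ v (S ∩ T) + v (S ∪ T))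
    {n : ℕ} (e : Fin n → U) (hinj : Function.Injective e)
    (φ : U → ℝ)
    (hφ : ∀ t : Fin n, φ (e t) = v (prefixSet e ((t : ℕ) + 1)) - v (prefixSet e (t : ℕ)))
    (T : Finset U) (hT : T ⊆ Finset.univ.image e) :
    ∑ j ∈ T, φ j ≤ v T := by
  have main : ∀ t : ℕ, t ≤ n → ∑ j ∈ T ∩ prefixSet e t, φ j ≤ v (T ∩ prefixSet e t) := by
    intro t
    induction t with
    | zero => intro _; simp [prefixSet, hempty]
    | succ t ih =>
      intro ht
      have ht' : t < n := ht
      have ih' := ih (le_of_lt ht')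
      set i : Fin n := ⟨t, ht'⟩ with hi
      have hps : prefixSet e (t + 1) = insert (e i) (prefixSet e t) := prefixSet_succ e i
      have hni : e i ∉ prefixSet e t := e_not_mem_prefix e hinj i
      by_cases hmem : e i ∈ T
      · have hsplit : T ∩ prefixSet e (t + 1) = insert (e i) (T ∩ prefixSet e t) := by
          rw [hps, Finset.inter_insert_of_mem hmem]
        have hni' : e i ∉ T ∩ prefixSet e t := fun h => hni (Finset.mem_inter.mp h).2
        have hS' : insert (e i) (T ∩ prefixSet e t) ∩ prefixSet e t = T ∩ prefixSet e t := by
          rw [Finset.insert_inter_of_notMem hni, Finset.inter_assoc, Finset.inter_self]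
        have hU' : insert (e i) (T ∩ prefixSet e t) ∪ prefixSet e t = prefixSet e (t + 1) := by
          rw [Finset.insert_union, Finset.union_eq_right.mpr Finset.inter_subset_right, ← hps]
        have hsubst := hsub (insert (e i) (T ∩ prefixSet e t)) (prefixSet e t)
        rw [hS', hU'] at hsubst
        have hphi := hφ i
        rw [hsplit, Finset.sum_insert hni']
        have : (i : ℕ) = t := rfl
        rw [this] at hphi
        linarith
      · have hsplit : T ∩ prefixSet e (t + 1) = T ∩ prefixSet e t := by
          rw [hps, Finset.inter_insert_of_notMem hmem]
        rw [hsplit]; exact ih'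
  have hn : prefixSet e n = Finset.univ.image e := by
    unfold prefixSet
    congr 1
    apply Finset.filter_true_of_mem
    intro i _
    exact i.isLt
  have hTn : T ∩ prefixSet e n = T := by
    rw [hn, Finset.inter_eq_left.mpr hT]
  have := main n le_rfl
  rwa [hTn] at this

theorem vhat_additive_on_P {U : Type*} [DecidableEq U] [Fintype U]
    (v : Finset U → ℝ)
    (hnn : ∀ S, 0 ≤ v S) (hempty : v ∅ = 0)
    (hmono : ∀ S T : Finset U, S ⊆ T → v S ≤ v T)
    (hsub : ∀ S T : Finset U, v S + v T ≥ v (S ∩ T) + v (S ∪ T))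
    {n : ℕ} (e : Fin n → U) (hinj : Function.Injective e)
    (φ : U → ℝ) (hφnn : ∀ j, 0 ≤ φ j)
    (hφ : ∀ t : Fin n, φ (e t) = v (prefixSet e ((t : ℕ) + 1)) - v (prefixSet e (t : ℕ))) :
    (∀ t : Fin n, vhat v φ {e t} = φ (e t)) ∧
    (∀ S : Finset U, S ⊆ Finset.univ.image e → vhat v φ S = ∑ j ∈ S, φ j) := by
  have h2 : ∀ S : Finset U, S ⊆ Finset.univ.image e → vhat v φ S = ∑ j ∈ S, φ j := by
    intro S hS
    apply le_antisymm
    · have hmem : ∅ ∈ S.powerset := Finset.mem_powerset.mpr (Finset.empty_subset S)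
      have := Finset.inf'_le (b := (∅ : Finset U))
        (f := fun T => v T + ∑ j ∈ S \ T, φ j) hmem
      simpa [vhat, hempty] using this
    · apply Finset.le_inf'
      intro T hT
      rw [Finset.mem_powerset] at hT
      have hkey : ∑ j ∈ T, φ j ≤ v T :=
        sum_phi_le v hempty hsub e hinj φ hφ T (hT.trans hS)
      have hsum : ∑ j ∈ S \ T, φ j + ∑ j ∈ T, φ j = ∑ j ∈ S, φ j :=
        Finset.sum_sdiff hT
      linarith
  refine ⟨fun t => ?_, h2⟩
  have : ({e t} : Finset U) ⊆ Finset.univ.image e := by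
    simp [Finset.singleton_subset_iff]
  rw [h2 _ this, Finset.sum_singleton]
end

section
/- Let $T$ be a random variable with $T \geq 1$ almost surely, let $k \geq 0$, and let $C \geq 0$ be such that $\mathbb{E}[(k - T)^+] \leq C$. Then $\mathbb{E}[(\ln k - \ln T)^+] \leq \ln(1 + C)$. -/
open MeasureTheory

lemma aux_ptwise (k C t : ℝ) (hk : 0 ≤ k) (hC : 0 ≤ C) (ht : 1 ≤ t) :
    max (Real.log k - Real.log t) 0 ≤
      Real.log (1 + C) + (max (k - t) 0 - C) / (1 + C) := by
  have h1C : (0:ℝ) < 1 + C := by linarith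
  have ht0 : (0:ℝ) < t := by linarith
  have step1 : max (Real.log k - Real.log t) 0 ≤ Real.log (1 + max (k - t) 0) := by
    have hpos : (0:ℝ) ≤ Real.log (1 + max (k - t) 0) := by
      apply Real.log_nonneg; simp [le_max_iff]
    rcases le_or_gt k t with h | h
    · have hlog : Real.log k ≤ Real.log t := by
        rcases eq_or_lt_of_le hk with h0 | h0
        · rw [← h0, Real.log_zero]; exact Real.log_nonneg ht
        · exact Real.log_le_log h0 h
      rw [max_le_iff]; exact ⟨by linarith, hpos⟩
    · have hk0 : (0:ℝ) < k := by linarith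
      rw [max_le_iff]
      refine ⟨?_, hpos⟩
      rw [← Real.log_div (ne_of_gt hk0) (ne_of_gt ht0)]
      apply Real.log_le_log (div_pos hk0 ht0)
      rw [div_le_iff₀ ht0]
      have hmax : max (k - t) 0 = k - t := max_eq_left (by linarith)
      rw [hmax]; nlinarith
  have step2 : Real.log (1 + max (k - t) 0) ≤
      Real.log (1 + C) + (max (k - t) 0 - C) / (1 + C) := by
    set x := max (k - t) 0 with hx
    have hx0 : 0 ≤ x := le_max_right _ _
    have h1x : (0:ℝ) < 1 + x := by linarith
    have h2 := Real.log_le_sub_one_of_pos (show (0:ℝ) < (1+x)/(1+C) from div_pos h1x h1C)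
    rw [Real.log_div (ne_of_gt h1x) (ne_of_gt h1C)] at h2
    have heq : (1+x)/(1+C) - 1 = (x - C)/(1+C) := by field_simp; ring
    linarith [heq ▸ h2]
  linarith

theorem pos_part_log_expectation_bound {Ω : Type*} [MeasurableSpace Ω] (μ : Measure Ω)
    [IsProbabilityMeasure μ] (T : Ω → ℝ) (hT1 : ∀ᵐ ω ∂μ, 1 ≤ T ω)
    (k C : ℝ) (hk : 0 ≤ k) (hC : 0 ≤ C)
    (hint1 : Integrable (fun ω => max (k - T ω) 0) μ)
    (hint2 : Integrable (fun ω => max (Real.log k - Real.log (T ω)) 0) μ)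
    (hbound : ∫ ω, max (k - T ω) 0 ∂μ ≤ C) :
    ∫ ω, max (Real.log k - Real.log (T ω)) 0 ∂μ ≤ Real.log (1 + C) := by
  have h1C : (0:ℝ) < 1 + C := by linarith
  have hintS : Integrable (fun ω => (max (k - T ω) 0 - C) / (1 + C)) μ :=
    (hint1.sub (integrable_const C)).div_const _
  have hintR : Integrable (fun ω => Real.log (1 + C) + (max (k - T ω) 0 - C) / (1 + C)) μ :=
    (integrable_const _).add hintS
  have hmono : ∫ ω, max (Real.log k - Real.log (T ω)) 0 ∂μ ≤
      ∫ ω, (Real.log (1 + C) + (max (k - T ω) 0 - C) / (1 + C)) ∂μ := by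
    apply integral_mono_ae hint2 hintR
    filter_upwards [hT1] with ω hω
    exact aux_ptwise k C (T ω) hk hC hω
  have hcalc : ∫ ω, (Real.log (1 + C) + (max (k - T ω) 0 - C) / (1 + C)) ∂μ =
      Real.log (1 + C) + ((∫ ω, max (k - T ω) 0 ∂μ) - C) / (1 + C) := by
    rw [integral_add (integrable_const _) hintS, integral_const, probReal_univ,
      one_smul, integral_div,
      integral_sub hint1 (integrable_const C), integral_const, probReal_univ,
      one_smul]
  rw [hcalc] at hmono
  have hle : ((∫ ω, max (k - T ω) 0 ∂μ) - C) / (1 + C) ≤ 0 :=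
    div_nonpos_of_nonpos_of_nonneg (by linarith) (le_of_lt h1C)
  linarith
end

section
/- Define $g : (0, \infty) \to \mathbb{R}$ by $g(c) = (1 - e^{-c})^{-c}$. Then $g(\ln 2) = 2^{\ln 2}$, and for all $c > 0$, $g(c) \leq 2^{\ln 2}$, with the maximum attained at $c = \ln 2$. -/
open Real Set

private noncomputable def Mfun : ℝ → ℝ := fun u => Real.log (Real.exp (Real.exp u) - 1)

private lemma phi_monotoneOn :
    MonotoneOn (fun T : ℝ => T / (1 - Real.exp (-T))) (Set.Ioi 0) := by
  apply monotoneOn_of_deriv_nonneg (convex_Ioi 0)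
  · apply ContinuousOn.div continuousOn_id
    · fun_prop
    · intro x hx
      have : Real.exp (-x) < 1 := Real.exp_lt_one_iff.2 (by simpa using hx)
      linarith
  · rw [interior_Ioi]
    intro x hx
    have hx' : (0:ℝ) < x := hx
    have h1 : Real.exp (-x) < 1 := Real.exp_lt_one_iff.2 (by simpa using hx')
    have hden : 1 - Real.exp (-x) ≠ 0 := by linarith
    have hd : HasDerivAt (fun T : ℝ => T / (1 - Real.exp (-T)))
        ((1 * (1 - Real.exp (-x)) - x * (Real.exp (-x) * 1)) / (1 - Real.exp (-x))^2) x := by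
      have hden' : HasDerivAt (fun T : ℝ => 1 - Real.exp (-T)) (Real.exp (-x) * 1) x := by
        have := ((Real.hasDerivAt_exp (-x)).comp x ((hasDerivAt_id x).neg))
        simpa using this.const_sub 1
      exact (hasDerivAt_id x).div hden' hden
    exact hd.differentiableAt.differentiableWithinAt
  · rw [interior_Ioi]
    intro x hx
    have hx' : (0:ℝ) < x := hx
    have h1 : Real.exp (-x) < 1 := Real.exp_lt_one_iff.2 (by simpa using hx')
    have hden : 1 - Real.exp (-x) ≠ 0 := by linarith
    have hden' : HasDerivAt (fun T : ℝ => 1 - Real.exp (-T)) (Real.exp (-x) * 1) x := by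
      have := ((Real.hasDerivAt_exp (-x)).comp x ((hasDerivAt_id x).neg))
      simpa using this.const_sub 1
    have hd : HasDerivAt (fun T : ℝ => T / (1 - Real.exp (-T)))
        ((1 * (1 - Real.exp (-x)) - x * (Real.exp (-x) * 1)) / (1 - Real.exp (-x))^2) x :=
      (hasDerivAt_id x).div hden' hden
    rw [hd.deriv]
    have key : x * Real.exp (-x) ≤ 1 - Real.exp (-x) := by
      have h2 : x + 1 ≤ Real.exp x := Real.add_one_le_exp x
      have h3 : Real.exp (-x) = (Real.exp x)⁻¹ := Real.exp_neg x
      have h4 : (0:ℝ) < Real.exp x := Real.exp_pos x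
      rw [h3]
      have h5 : x * (Real.exp x)⁻¹ ≤ (Real.exp x - 1) * (Real.exp x)⁻¹ :=
        mul_le_mul_of_nonneg_right (by linarith) (by positivity)
      have h6 : (Real.exp x - 1) * (Real.exp x)⁻¹ = 1 - (Real.exp x)⁻¹ := by
        field_simp
      linarith
    apply div_nonneg _ (sq_nonneg _)
    nlinarith

private lemma M_hasDerivAt (u : ℝ) :
    HasDerivAt Mfun (Real.exp (Real.exp u) * Real.exp u / (Real.exp (Real.exp u) - 1)) u := by
  have h1 : (1:ℝ) < Real.exp (Real.exp u) := by
    have := Real.exp_pos u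
    calc (1:ℝ) = Real.exp 0 := (Real.exp_zero).symm
    _ < Real.exp (Real.exp u) := Real.exp_lt_exp.2 this
  have hinner : HasDerivAt (fun v : ℝ => Real.exp (Real.exp v) - 1)
      (Real.exp (Real.exp u) * Real.exp u) u := by
    have := ((Real.hasDerivAt_exp (Real.exp u)).comp u (Real.hasDerivAt_exp u))
    simpa using this.sub_const 1
  have := hinner.log (by linarith)
  rw [show Mfun = fun y => Real.log (Real.exp (Real.exp y) - 1) from rfl]
  simpa [div_eq_mul_inv, mul_comm] using this

private lemma M_deriv_eq (u : ℝ) :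
    deriv Mfun u = Real.exp u / (1 - Real.exp (-(Real.exp u))) := by
  rw [(M_hasDerivAt u).deriv]
  have h1 : (0:ℝ) < Real.exp (Real.exp u) := Real.exp_pos _
  have h2 : (1:ℝ) < Real.exp (Real.exp u) := by
    calc (1:ℝ) = Real.exp 0 := (Real.exp_zero).symm
    _ < Real.exp (Real.exp u) := Real.exp_lt_exp.2 (Real.exp_pos u)
  rw [Real.exp_neg]
  field_simp

private lemma M_convex : ConvexOn ℝ Set.univ Mfun := by
  apply Monotone.convexOn_univ_of_deriv
  · exact fun u => (M_hasDerivAt u).differentiableAt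
  · intro u v huv
    rw [M_deriv_eq, M_deriv_eq]
    exact phi_monotoneOn (Real.exp_pos u) (Real.exp_pos v)
      (Real.exp_le_exp.2 huv)

private lemma key_ineq {c s : ℝ} (hc : 0 < c) (hs : 0 < s)
    (h : Real.exp (-c) + Real.exp (-s) = 1) : c * s ≤ Real.log 2 ^ 2 := by
  have hA : (1:ℝ) < Real.exp c := by
    calc (1:ℝ) = Real.exp 0 := (Real.exp_zero).symm
    _ < Real.exp c := Real.exp_lt_exp.2 hc
  have hB : (1:ℝ) < Real.exp s := by
    calc (1:ℝ) = Real.exp 0 := (Real.exp_zero).symm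
    _ < Real.exp s := Real.exp_lt_exp.2 hs
  have hprod : (Real.exp c - 1) * (Real.exp s - 1) = 1 := by
    rw [Real.exp_neg, Real.exp_neg] at h
    have h1 : (0:ℝ) < Real.exp c := Real.exp_pos c
    have h2 : (0:ℝ) < Real.exp s := Real.exp_pos s
    field_simp at h
    nlinarith
  have hMc : Mfun (Real.log c) = Real.log (Real.exp c - 1) := by
    simp [Mfun, Real.exp_log hc]
  have hMs : Mfun (Real.log s) = Real.log (Real.exp s - 1) := by
    simp [Mfun, Real.exp_log hs]
  have hsum : Mfun (Real.log c) + Mfun (Real.log s) = 0 := by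
    rw [hMc, hMs, ← Real.log_mul (by linarith) (by linarith), hprod, Real.log_one]
  have hmid := M_convex.2 (Set.mem_univ (Real.log c)) (Set.mem_univ (Real.log s))
    (by norm_num : (0:ℝ) ≤ 1/2) (by norm_num : (0:ℝ) ≤ 1/2) (by norm_num)
  set m := (1/2 : ℝ) * Real.log c + (1/2 : ℝ) * Real.log s with hm
  have hmid' : Mfun m ≤ 0 := by
    simp only [smul_eq_mul] at hmid
    rw [← hm] at hmid
    linarith
  have hXpos : (0:ℝ) < Real.exp (Real.exp m) - 1 := by
    have : (1:ℝ) < Real.exp (Real.exp m) := by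
      calc (1:ℝ) = Real.exp 0 := (Real.exp_zero).symm
      _ < Real.exp (Real.exp m) := Real.exp_lt_exp.2 (Real.exp_pos m)
    linarith
  have hX1 : Real.exp (Real.exp m) - 1 ≤ 1 := by
    have := Real.exp_le_exp.2 hmid'
    rwa [Mfun, Real.exp_log hXpos, Real.exp_zero] at this
  have hexp2 : Real.exp (Real.exp m) ≤ 2 := by linarith
  have hem : Real.exp m ≤ Real.log 2 := by
    have := Real.exp_log (by norm_num : (0:ℝ) < 2)
    rw [← this] at hexp2
    exact Real.exp_le_exp.1 hexp2
  have hcs : c * s = Real.exp m * Real.exp m := by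
    rw [← Real.exp_add]
    rw [hm]
    have : (1/2:ℝ) * Real.log c + (1/2:ℝ) * Real.log s
        + ((1/2:ℝ) * Real.log c + (1/2:ℝ) * Real.log s) = Real.log c + Real.log s := by ring
    rw [this, Real.exp_add, Real.exp_log hc, Real.exp_log hs]
  rw [hcs, sq]
  have h0 : (0:ℝ) ≤ Real.exp m := (Real.exp_pos m).le
  nlinarith

theorem gap_function_max_submodular :
    (1 - Real.exp (-Real.log 2)) ^ (-Real.log 2) = (2 : ℝ) ^ Real.log 2 ∧
    ∀ c : ℝ, 0 < c → (1 - Real.exp (-c)) ^ (-c) ≤ (2 : ℝ) ^ Real.log 2 := by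
  constructor
  · have h2 : Real.exp (-Real.log 2) = (2:ℝ)⁻¹ := by
      rw [Real.exp_neg, Real.exp_log (by norm_num : (0:ℝ) < 2)]
    rw [h2]
    have : (1 : ℝ) - (2:ℝ)⁻¹ = (2:ℝ)⁻¹ := by norm_num
    rw [this, Real.inv_rpow (by norm_num : (0:ℝ) ≤ 2), Real.rpow_neg (by norm_num : (0:ℝ) ≤ 2),
      inv_inv]
  · intro c hc
    have h1 : Real.exp (-c) < 1 := Real.exp_lt_one_iff.2 (by simpa using hc)
    have h0 : (0:ℝ) < Real.exp (-c) := Real.exp_pos _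
    have hx : (0:ℝ) < 1 - Real.exp (-c) := by linarith
    have hx1 : 1 - Real.exp (-c) < 1 := by linarith
    set s : ℝ := -Real.log (1 - Real.exp (-c)) with hsdef
    have hs : 0 < s := by
      have : Real.log (1 - Real.exp (-c)) < 0 := Real.log_neg hx hx1
      simpa [hsdef] using neg_pos.2 this
    have hes : Real.exp (-s) = 1 - Real.exp (-c) := by
      rw [hsdef, neg_neg, Real.exp_log hx]
    have hcon : Real.exp (-c) + Real.exp (-s) = 1 := by rw [hes]; ring
    have hcs : c * s ≤ Real.log 2 ^ 2 := key_ineq hc hs hcon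
    rw [Real.rpow_def_of_pos hx]
    have hlog : Real.log (1 - Real.exp (-c)) = -s := by rw [hsdef, neg_neg]
    rw [hlog]
    have h2 : (2:ℝ) ^ Real.log 2 = Real.exp (Real.log 2 * Real.log 2) := by
      rw [Real.rpow_def_of_pos (by norm_num : (0:ℝ) < 2)]
    rw [h2]
    apply Real.exp_le_exp.2
    nlinarith
end
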